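/- Let $N = 3$ and define affine functions $\bar\Lambda_i(x) = a_i^\top x - 1$ on $\mathbb{R}^3_+$ with $a_1 = (1, 0, 0.75)^\top$, $a_2 = (0, 1, 0.75)^\top$, $a_3 = (0.5, 0.5, 0.75)^\top$. For the acceptance criterion $\bar\Lambda_i(m) \ge 0$ (deterministic shock $X = 0$), the Nash system $m_i = \inf\{s \in \mathbb{R} \mid \bar\Lambda_i(s, m_{-i}) \ge 0, (s, m_{-i}) \in \mathbb{R}^3_+\}$ admits, for every $t \in [0,1]$, the solution $m = (1-t, 1-t, 4t/3)^\top$; in particular there are infinitely many Nash allocations. -/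

import Mathlib

/-- The coefficient vectors of the alternative decomposition
`Λ̄ᵢ(x) = aᵢᵀ x - 1`. -/
noncomputable def aCoef : Fin 3 → Fin 3 → ℝ :=
  ![![1, 0, 3/4], ![0, 1, 3/4], ![1/2, 1/2, 3/4]]

/-- `m` is a Nash allocation for the affine decomposition with deterministic
shock `X = 0`: each `m i` is the infimum (greatest lower bound) of capitals `s`
such that the capital vector with `i`-th entry replaced by `s` is nonnegative
and bank `i`'s affine aggregation is acceptable. -/
def IsNashAlloc3 (m : Fin 3 → ℝ) : Prop :=
  ∀ i : Fin 3,
    IsGLB {s : ℝ | (∀ j, 0 ≤ Function.update m i s j) ∧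
      0 ≤ (∑ j, aCoef i j * Function.update m i s j) - 1} (m i)

lemma nash_of_t (t : ℝ) (ht : t ∈ Set.Icc (0:ℝ) 1) :
    IsNashAlloc3 ![1 - t, 1 - t, 4 * t / 3] := by
  obtain ⟨h0, h1⟩ := ht
  intro i
  fin_cases i
  · convert isGLB_Ici (a := 1 - t) using 1
    · rfl
    ext s
    simp [Fin.forall_fin_succ, Function.update_apply, Fin.sum_univ_three, aCoef,
      Set.mem_Ici]
    intro h
    exact ⟨by linarith, by linarith, by linarith⟩
    · rfl
  · convert isGLB_Ici (a := 1 - t) using 1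
    · rfl
    ext s
    simp [Fin.forall_fin_succ, Function.update_apply, Fin.sum_univ_three, aCoef,
      Set.mem_Ici]
    intro h
    exact ⟨by linarith, by linarith, by linarith⟩
    · rfl
  · convert isGLB_Ici (a := 4 * t / 3) using 1
    · rfl
    ext s
    simp [Fin.forall_fin_succ, Function.update_apply, Fin.sum_univ_three, aCoef,
      Set.mem_Ici]
    constructor
    · rintro ⟨_, h⟩; linarith
    · intro h; exact ⟨⟨by linarith, by linarith⟩, by linarith⟩
    · rfl

/-- For every `t ∈ [0,1]`, the vector `(1-t, 1-t, 4t/3)` is a Nash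
allocation; in particular there are infinitely many Nash allocations. -/
theorem affine_decomposition_nonunique_nash :
    (∀ t ∈ Set.Icc (0:ℝ) 1, IsNashAlloc3 ![1 - t, 1 - t, 4 * t / 3]) ∧
      {m : Fin 3 → ℝ | IsNashAlloc3 m}.Infinite := by
  refine ⟨nash_of_t, ?_⟩
  have himg : ((fun t : ℝ => ![1 - t, 1 - t, 4 * t / 3]) '' Set.Icc 0 1).Infinite := by
    apply Set.Infinite.image
    · intro a ha b hb hab
      have := congrFun hab 0
      simp at this
      linarith
    · exact Set.infinite_coe_iff.mp (Set.Icc.infinite (show (0:ℝ) < 1 by norm_num))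
  refine himg.mono ?_
  rintro m ⟨t, ht, rfl⟩
  exact nash_of_t t ht
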